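/- In the Steiner Tree instance G_φ constructed from a SAT formula φ with k variables and ℓ clauses, there is a Steiner tree connecting all terminals of cost at most 12k + Σ_{i=1}^{ℓ} 11^{i+1} if and only if φ is satisfiable. -/

import Mathlib

open SimpleGraph Set

namespace HD

variable {V : Type*}

/-- Weighted length of a walk: sum of the weights of its edges. -/
noncomputable def wlen (w : Sym2 V → ℝ) {G : SimpleGraph V} {u v : V} (p : G.Walk u v) : ℝ :=
  (p.darts.map fun d => w s(d.toProd.1, d.toProd.2)).sum

/-- Shortest-path distance in a weighted graph. -/
noncomputable def gdist (G : SimpleGraph V) (w : Sym2 V → ℝ) (u v : V) : ℝ :=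
  sInf {L | ∃ p : G.Walk u v, wlen w p = L}

/-- Ball of radius `r` around `v`. -/
def ball (G : SimpleGraph V) (w : Sym2 V → ℝ) (v : V) (r : ℝ) : Set V :=
  {u | gdist G w v u ≤ r}

/-- `S` is a shortest path cover for scale `r`: it hits (the vertex set of) every
shortest path of length in `(r, 2r]`. -/
def IsSPC (G : SimpleGraph V) (w : Sym2 V → ℝ) (S : Set V) (r : ℝ) : Prop :=
  ∀ u v : V, ∀ p : G.Walk u v, p.IsPath → wlen w p = gdist G w u v →
    r < wlen w p → wlen w p ≤ 2 * r → ∃ x ∈ S, x ∈ p.support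

/-- `S` is locally `h`-sparse for scale `r`: every ball of radius `2r` contains
at most `h` vertices of `S`. -/
def Sparse (G : SimpleGraph V) (w : Sym2 V → ℝ) (S : Set V) (r : ℝ) (h : ℕ) : Prop :=
  ∀ v : V, (S ∩ ball G w v (2 * r)).ncard ≤ h

/-- The highway dimension of `(G, w)` is at most `h`: for every scale there
is a locally `h`-sparse shortest path cover. -/
def HDLe (G : SimpleGraph V) (w : Sym2 V → ℝ) (h : ℕ) : Prop :=
  ∀ r : ℝ, 0 < r → ∃ S : Set V, IsSPC G w S r ∧ Sparse G w S r h

/-- A metric graph: edge weights are positive and every edge is a shortest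
path between its endpoints. -/
def MetricGraph (G : SimpleGraph V) (w : Sym2 V → ℝ) : Prop :=
  (∀ e ∈ G.edgeSet, 0 < w e) ∧ ∀ u v : V, G.Adj u v → gdist G w u v = w s(u, v)

/-- The subgraph `G_{≤ t}` spanned by all edges of weight at most `t`. -/
def leSub (G : SimpleGraph V) (w : Sym2 V → ℝ) (t : ℝ) : SimpleGraph V where
  Adj u v := G.Adj u v ∧ w s(u, v) ≤ t
  symm := by
    constructor
    intro u v hv
    obtain ⟨h1, h2⟩ := hv
    exact ⟨h1.symm, by rwa [Sym2.eq_swap] at h2⟩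
  loopless := ⟨fun v hv => G.loopless.irrefl v hv.1⟩

/-- A tree decomposition of `G`: a tree `T` on index type `ι` with bags covering
all vertices and all edges, such that the bags containing any fixed vertex induce
a connected subtree. -/
def IsTreeDecomp (G : SimpleGraph V) {ι : Type*} (T : SimpleGraph ι) (bag : ι → Set V) : Prop :=
  T.IsTree ∧ (∀ v : V, ∃ i, v ∈ bag i) ∧
    (∀ u v : V, G.Adj u v → ∃ i, u ∈ bag i ∧ v ∈ bag i) ∧
    ∀ v : V, (T.induce {i | v ∈ bag i}).Connected

end HD


/-- Vertices of the graph `G_φ` built from a SAT formula with `k` variables and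
`ℓ` clauses. -/
inductive PhiVert (k l : ℕ) : Type
  | t : Fin k → PhiVert k l
  | u : Fin k → PhiVert k l
  | f : Fin k → PhiVert k l
  | root : PhiVert k l
  | clause : Fin l → PhiVert k l
  deriving DecidableEq

/-- The adjacency relation of `G_φ`: the paths `t_x — u_x — f_x`, the root joined to
all `t_x` and `f_x`, and each clause vertex `v_i` joined to `t_x` for positive
occurrences of `x` in `C_i` and to `f_x` for negative occurrences.  Here the formula is
encoded as `φ : Fin l → Fin k → Option Bool`, with `φ i x = some true` meaning `x`
occurs positively in clause `i`, `some false` negatively, `none` not at all. -/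
def phiAdj {k l : ℕ} (φ : Fin l → Fin k → Option Bool)
    (a b : PhiVert k l) : Prop :=
  (∃ x : Fin k, (a = .t x ∧ b = .u x) ∨ (a = .u x ∧ b = .t x)
      ∨ (a = .u x ∧ b = .f x) ∨ (a = .f x ∧ b = .u x))
  ∨ (∃ x : Fin k, (a = .root ∧ b = .t x) ∨ (a = .t x ∧ b = .root)
      ∨ (a = .root ∧ b = .f x) ∨ (a = .f x ∧ b = .root))
  ∨ (∃ (i : Fin l) (x : Fin k), φ i x = some true ∧
      ((a = .clause i ∧ b = .t x) ∨ (a = .t x ∧ b = .clause i)))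
  ∨ (∃ (i : Fin l) (x : Fin k), φ i x = some false ∧
      ((a = .clause i ∧ b = .f x) ∨ (a = .f x ∧ b = .clause i)))

/-- The terminals of the Steiner Tree instance `G_φ`: the root, all `u_x`, and all
clause vertices `v_i`. -/
def phiTerminals (k l : ℕ) : Set (PhiVert k l) :=
  {v | (∃ x : Fin k, v = .u x) ∨ v = .root ∨ ∃ i : Fin l, v = .clause i}


namespace Stmt9Aux

/-- Explicit equivalence of `PhiVert` with a sum type. -/
def phiEquiv (k l : ℕ) : PhiVert k l ≃ (Fin k ⊕ Fin k ⊕ Fin k ⊕ Unit ⊕ Fin l) where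
  toFun v := match v with
    | .t x => .inl x
    | .u x => .inr (.inl x)
    | .f x => .inr (.inr (.inl x))
    | .root => .inr (.inr (.inr (.inl ())))
    | .clause i => .inr (.inr (.inr (.inr i)))
  invFun c := match c with
    | .inl x => .t x
    | .inr (.inl x) => .u x
    | .inr (.inr (.inl x)) => .f x
    | .inr (.inr (.inr (.inl _))) => .root
    | .inr (.inr (.inr (.inr i))) => .clause i
  left_inv v := by cases v <;> rfl
  right_inv c := by rcases c with x | x | x | u | i <;> rfl

instance instFintypePhiVert (k l : ℕ) : Fintype (PhiVert k l) :=
  Fintype.ofEquiv _ (phiEquiv k l).symm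

/-- Codes for the possible edges of `G_φ`. -/
abbrev ECode (k l : ℕ) :=
  (Fin k ⊕ Fin k) ⊕ (Fin k ⊕ Fin k) ⊕ ((Fin l × Fin k) ⊕ (Fin l × Fin k))

/-- The edge corresponding to a code. -/
def eEdge {k l : ℕ} : ECode k l → Sym2 (PhiVert k l)
  | .inl (.inl x) => s(.t x, .u x)
  | .inl (.inr x) => s(.u x, .f x)
  | .inr (.inl (.inl x)) => s(.root, .t x)
  | .inr (.inl (.inr x)) => s(.root, .f x)
  | .inr (.inr (.inl (i, x))) => s(.clause i, .t x)
  | .inr (.inr (.inr (i, x))) => s(.clause i, .f x)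

/-- The weight that the edge of a code must carry. -/
noncomputable def eVal {k l : ℕ} : ECode k l → ℝ
  | .inl (.inl _) => 1
  | .inl (.inr _) => 1
  | .inr (.inl (.inl _)) => 11
  | .inr (.inl (.inr _)) => 11
  | .inr (.inr (.inl (i, _))) => 11 ^ ((i : ℕ) + 2)
  | .inr (.inr (.inr (i, _))) => 11 ^ ((i : ℕ) + 2)

lemma eEdge_injective {k l : ℕ} : Function.Injective (eEdge (k := k) (l := l)) := by
  intro c c' h
  rcases c with (x | x) | ((x | x) | (⟨i, x⟩ | ⟨i, x⟩)) <;>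
    rcases c' with (y | y) | ((y | y) | (⟨j, y⟩ | ⟨j, y⟩)) <;>
      simp_all [eEdge, Sym2.eq_iff]

theorem conn_card_aux {W : Type*} [Fintype W] (G : SimpleGraph W)
    (hG : G.Connected) : Fintype.card W ≤ G.edgeSet.toFinite.toFinset.card + 1 := by
  classical
  obtain ⟨r⟩ := hG.nonempty
  have H : ∀ v : W, ∃ nv : W, v ≠ r → G.Adj v nv ∧ G.dist nv r < G.dist v r := by
    intro v
    by_cases hv : v = r
    · exact ⟨r, fun h => absurd hv h⟩
    · obtain ⟨p, hp⟩ := (hG.preconnected v r).exists_walk_length_eq_dist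
      have hne : ¬ p.Nil := by
        intro h
        exact hv (SimpleGraph.Walk.eq_of_length_eq_zero
          (SimpleGraph.Walk.nil_iff_length_eq.mp h))
      obtain ⟨x, h, q, rfl⟩ := SimpleGraph.Walk.not_nil_iff.mp hne
      refine ⟨x, fun _ => ⟨h, ?_⟩⟩
      have h1 : G.dist x r ≤ q.length := SimpleGraph.dist_le q
      have h2 : q.length + 1 = G.dist v r := by simpa using hp
      omega
  choose nv hnv using H
  have hmaps : ∀ v ∈ Finset.univ.erase r, s(v, nv v) ∈ G.edgeSet.toFinite.toFinset := by
    intro v hv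
    rw [Set.Finite.mem_toFinset]
    exact (hnv v (Finset.mem_erase.mp hv).1).1
  have hinj : Set.InjOn (fun v => s(v, nv v)) (Finset.univ.erase r) := by
    intro a ha b hb hab
    have ha' := (Finset.mem_erase.mp ha).1
    have hb' := (Finset.mem_erase.mp hb).1
    rcases Sym2.eq_iff.mp hab with ⟨h1, _⟩ | ⟨h1, h2⟩
    · exact h1
    · exfalso
      have da := (hnv a ha').2
      have db := (hnv b hb').2
      rw [h2, h1] at da
      omega
  have hcard := Finset.card_le_card_of_injOn _ hmaps hinj
  rw [Finset.card_erase_of_mem (Finset.mem_univ r)] at hcard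
  simp only [Finset.card_univ] at hcard
  omega

/-- Decomposition of a sum over `PhiVert`. -/
lemma sum_phiVert {k l : ℕ} {M : Type*} [AddCommMonoid M] (f : PhiVert k l → M) :
    ∑ v : PhiVert k l, f v =
      (∑ x : Fin k, f (.t x)) + ((∑ x : Fin k, f (.u x)) + ((∑ x : Fin k, f (.f x))
        + (f .root + ∑ i : Fin l, f (.clause i)))) := by
  rw [← Equiv.sum_comp (phiEquiv k l).symm f]
  simp [Fintype.sum_sum_type, phiEquiv]

/-- Sum of an `if-then-else` of a constant. -/
lemma sum_ite_const {β : Type*} (s : Finset β) (p : β → Prop) [DecidablePred p] (a : ℝ) :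
    (∑ x ∈ s, if p x then a else 0) = a * ((∑ x ∈ s, if p x then 1 else 0 : ℕ) : ℝ) := by
  rw [Nat.cast_sum, Finset.mul_sum]
  refine Finset.sum_congr rfl fun x _ => ?_
  split <;> simp



theorem construct {k l : ℕ} (φ : Fin l → Fin k → Option Bool)
    (G : SimpleGraph (PhiVert k l)) (w : Sym2 (PhiVert k l) → ℝ)
    (hG : ∀ a b : PhiVert k l, G.Adj a b ↔ phiAdj φ a b)
    (hw1 : ∀ x : Fin k, w s(PhiVert.t x, PhiVert.u x) = 1)
    (hw2 : ∀ x : Fin k, w s(PhiVert.u x, PhiVert.f x) = 1)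
    (hw3 : ∀ x : Fin k, w s(PhiVert.root, PhiVert.t x) = 11)
    (hw4 : ∀ x : Fin k, w s(PhiVert.root, PhiVert.f x) = 11)
    (hw5 : ∀ (i : Fin l) (x : Fin k), φ i x = some true →
      w s(PhiVert.clause i, PhiVert.t x) = 11 ^ ((i : ℕ) + 2))
    (hw6 : ∀ (i : Fin l) (x : Fin k), φ i x = some false →
      w s(PhiVert.clause i, PhiVert.f x) = 11 ^ ((i : ℕ) + 2))
    (A : Fin k → Bool)
    (hA : ∀ i : Fin l, ∃ (x : Fin k) (b : Bool), φ i x = some b ∧ A x = b) :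
    ∃ T : G.Subgraph, T.Connected ∧ phiTerminals k l ⊆ T.verts ∧
        ∑ᶠ e ∈ T.edgeSet, w e ≤ 12 * k + ∑ i : Fin l, (11 : ℝ) ^ ((i : ℕ) + 2) := by
  classical
  choose xw bw hφw hAw using hA
  set lit : Fin k → PhiVert k l := fun x => if A x then .t x else .f x with hlitdef
  have hlit_cases : ∀ x, lit x = .t x ∨ lit x = .f x := by
    intro x; by_cases h : A x <;> simp [hlitdef, h]
  have hlit_inj : ∀ x y, lit x = lit y → x = y := by
    intro x y h
    rcases hlit_cases x with hx | hx <;> rcases hlit_cases y with hy | hy <;>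
      rw [hx, hy] at h <;> simp_all
  have hadj1 : ∀ x, G.Adj PhiVert.root (lit x) := by
    intro x
    rcases hlit_cases x with hx | hx <;> rw [hx] <;> rw [hG] <;> unfold phiAdj
    · exact Or.inr (Or.inl ⟨x, Or.inl ⟨rfl, rfl⟩⟩)
    · exact Or.inr (Or.inl ⟨x, Or.inr (Or.inr (Or.inl ⟨rfl, rfl⟩))⟩)
  have hadj2 : ∀ x, G.Adj (lit x) (PhiVert.u x) := by
    intro x
    rcases hlit_cases x with hx | hx <;> rw [hx] <;> rw [hG] <;> unfold phiAdj
    · exact Or.inl ⟨x, Or.inl ⟨rfl, rfl⟩⟩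
    · exact Or.inl ⟨x, Or.inr (Or.inr (Or.inr ⟨rfl, rfl⟩))⟩
  have hadj3 : ∀ i, G.Adj (PhiVert.clause i) (lit (xw i)) := by
    intro i
    have hAx : A (xw i) = bw i := hAw i
    have hφx := hφw i
    cases hb : bw i
    · have hl : lit (xw i) = .f (xw i) := by simp [hlitdef, hAx, hb]
      rw [hl, hG]; unfold phiAdj
      rw [hb] at hφx
      exact Or.inr (Or.inr (Or.inr ⟨i, xw i, hφx, Or.inl ⟨rfl, rfl⟩⟩))
    · have hl : lit (xw i) = .t (xw i) := by simp [hlitdef, hAx, hb]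
      rw [hl, hG]; unfold phiAdj
      rw [hb] at hφx
      exact Or.inr (Or.inr (Or.inl ⟨i, xw i, hφx, Or.inl ⟨rfl, rfl⟩⟩))
  set Tv : Set (PhiVert k l) :=
    {v | v = .root ∨ (∃ x, v = .u x) ∨ (∃ x, v = lit x) ∨ ∃ i, v = .clause i} with hTvdef
  set TA : PhiVert k l → PhiVert k l → Prop := fun a b =>
    (∃ x, a = .root ∧ b = lit x) ∨ (∃ x, a = lit x ∧ b = .root)
    ∨ (∃ x, a = lit x ∧ b = .u x) ∨ (∃ x, a = .u x ∧ b = lit x)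
    ∨ (∃ i, a = .clause i ∧ b = lit (xw i)) ∨ (∃ i, a = lit (xw i) ∧ b = .clause i)
    with hTAdef
  have hsub : ∀ a b, TA a b → G.Adj a b := by
    rintro a b (⟨x, rfl, rfl⟩ | ⟨x, rfl, rfl⟩ | ⟨x, rfl, rfl⟩ | ⟨x, rfl, rfl⟩ |
      ⟨i, rfl, rfl⟩ | ⟨i, rfl, rfl⟩)
    · exact hadj1 x
    · exact (hadj1 x).symm
    · exact hadj2 x
    · exact (hadj2 x).symm
    · exact hadj3 i
    · exact (hadj3 i).symm
  have hev : ∀ a b, TA a b → a ∈ Tv := by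
    rintro a b (⟨x, rfl, rfl⟩ | ⟨x, rfl, rfl⟩ | ⟨x, rfl, rfl⟩ | ⟨x, rfl, rfl⟩ |
      ⟨i, rfl, rfl⟩ | ⟨i, rfl, rfl⟩)
    · exact Or.inl rfl
    · exact Or.inr (Or.inr (Or.inl ⟨x, rfl⟩))
    · exact Or.inr (Or.inr (Or.inl ⟨x, rfl⟩))
    · exact Or.inr (Or.inl ⟨x, rfl⟩)
    · exact Or.inr (Or.inr (Or.inr ⟨i, rfl⟩))
    · exact Or.inr (Or.inr (Or.inl ⟨xw i, rfl⟩))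
  have hsym : ∀ a b, TA a b → TA b a := by
    rintro a b (⟨x, rfl, rfl⟩ | ⟨x, rfl, rfl⟩ | ⟨x, rfl, rfl⟩ | ⟨x, rfl, rfl⟩ |
      ⟨i, rfl, rfl⟩ | ⟨i, rfl, rfl⟩)
    · exact Or.inr (Or.inl ⟨x, rfl, rfl⟩)
    · exact Or.inl ⟨x, rfl, rfl⟩
    · exact Or.inr (Or.inr (Or.inr (Or.inl ⟨x, rfl, rfl⟩)))
    · exact Or.inr (Or.inr (Or.inl ⟨x, rfl, rfl⟩))
    · exact Or.inr (Or.inr (Or.inr (Or.inr (Or.inr ⟨i, rfl, rfl⟩))))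
    · exact Or.inr (Or.inr (Or.inr (Or.inr (Or.inl ⟨i, rfl, rfl⟩))))
  have hTex : ∃ T : G.Subgraph, T.verts = Tv ∧ ∀ a b, T.Adj a b ↔ TA a b :=
    ⟨{ verts := Tv, Adj := TA, adj_sub := fun h => hsub _ _ h,
       edge_vert := fun h => hev _ _ h, symm := ⟨fun a b h => hsym a b h⟩ },
      rfl, fun a b => Iff.rfl⟩
  obtain ⟨T, hTv, hTA⟩ := hTex
  have hmem : ∀ v, v ∈ Tv → v ∈ T.verts := fun v hv => by rw [hTv]; exact hv
  have hroot : PhiVert.root ∈ T.verts := hmem _ (Or.inl rfl)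
  have hlitmem : ∀ x, lit x ∈ T.verts := fun x => hmem _ (Or.inr (Or.inr (Or.inl ⟨x, rfl⟩)))
  have humem : ∀ x, PhiVert.u x ∈ T.verts := fun x => hmem _ (Or.inr (Or.inl ⟨x, rfl⟩))
  have hclmem : ∀ i, PhiVert.clause i ∈ T.verts :=
    fun i => hmem _ (Or.inr (Or.inr (Or.inr ⟨i, rfl⟩)))
  have step : ∀ (a b : PhiVert k l) (ha : a ∈ T.verts) (hb : b ∈ T.verts),
      TA a b → T.coe.Adj ⟨a, ha⟩ ⟨b, hb⟩ := by
    intro a b ha hb h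
    exact (hTA a b).mpr h
  refine ⟨T, ?_, ?_, ?_⟩
  · -- connectedness
    rw [SimpleGraph.Subgraph.connected_iff]
    refine ⟨⟨?_⟩, ⟨.root, hroot⟩⟩
    have hreach : ∀ (a : PhiVert k l) (ha : a ∈ T.verts),
        T.coe.Reachable ⟨a, ha⟩ ⟨.root, hroot⟩ := by
      intro a ha
      have ha' : a = .root ∨ (∃ x, a = .u x) ∨ (∃ x, a = lit x) ∨ ∃ i, a = .clause i := by
        rw [hTv] at ha; exact ha
      rcases ha' with rfl | ⟨x, rfl⟩ | ⟨x, rfl⟩ | ⟨i, rfl⟩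
      · exact Reachable.refl _
      · exact (Adj.reachable (step _ _ _ (hlitmem x)
            (Or.inr (Or.inr (Or.inr (Or.inl ⟨x, rfl, rfl⟩)))))).trans
          (Adj.reachable (step _ _ (hlitmem x) hroot (Or.inr (Or.inl ⟨x, rfl, rfl⟩))))
      · exact Adj.reachable (step _ _ _ hroot (Or.inr (Or.inl ⟨x, rfl, rfl⟩)))
      · exact (Adj.reachable (step _ _ _ (hlitmem (xw i))
            (Or.inr (Or.inr (Or.inr (Or.inr (Or.inl ⟨i, rfl, rfl⟩))))))).trans
          (Adj.reachable (step _ _ (hlitmem (xw i)) hroot (Or.inr (Or.inl ⟨xw i, rfl, rfl⟩))))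
    rintro ⟨a, ha⟩ ⟨b, hb⟩
    exact (hreach a ha).trans (hreach b hb).symm
  · -- terminals
    rintro v (⟨x, rfl⟩ | rfl | ⟨i, rfl⟩)
    · exact humem x
    · exact hroot
    · exact hclmem i
  · -- cost
    set F1 : Finset (Sym2 (PhiVert k l)) := Finset.univ.image fun x => s(.root, lit x) with hF1
    set F2 : Finset (Sym2 (PhiVert k l)) := Finset.univ.image fun x => s(lit x, .u x) with hF2
    set F3 : Finset (Sym2 (PhiVert k l)) :=
      Finset.univ.image fun i => s(.clause i, lit (xw i)) with hF3
    have hedge : T.edgeSet = ((F1 ∪ F2 ∪ F3 : Finset (Sym2 (PhiVert k l))) :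
        Set (Sym2 (PhiVert k l))) := by
      ext e
      induction e using Sym2.ind with
      | _ a b =>
        rw [SimpleGraph.Subgraph.mem_edgeSet, hTA]
        simp only [Finset.coe_union, Set.mem_union, Finset.mem_coe, hF1, hF2, hF3,
          Finset.mem_image, Finset.mem_univ, true_and]
        constructor
        · rintro (⟨x, rfl, rfl⟩ | ⟨x, rfl, rfl⟩ | ⟨x, rfl, rfl⟩ | ⟨x, rfl, rfl⟩ |
            ⟨i, rfl, rfl⟩ | ⟨i, rfl, rfl⟩)
          · exact Or.inl (Or.inl ⟨x, rfl⟩)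
          · exact Or.inl (Or.inl ⟨x, Sym2.eq_swap⟩)
          · exact Or.inl (Or.inr ⟨x, rfl⟩)
          · exact Or.inl (Or.inr ⟨x, Sym2.eq_swap⟩)
          · exact Or.inr ⟨i, rfl⟩
          · exact Or.inr ⟨i, Sym2.eq_swap⟩
        · rintro ((⟨x, hx⟩ | ⟨x, hx⟩) | ⟨i, hx⟩) <;>
            rcases Sym2.eq_iff.mp hx with ⟨rfl, rfl⟩ | ⟨rfl, rfl⟩
          · exact Or.inl ⟨x, rfl, rfl⟩
          · exact Or.inr (Or.inl ⟨x, rfl, rfl⟩)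
          · exact Or.inr (Or.inr (Or.inl ⟨x, rfl, rfl⟩))
          · exact Or.inr (Or.inr (Or.inr (Or.inl ⟨x, rfl, rfl⟩)))
          · exact Or.inr (Or.inr (Or.inr (Or.inr (Or.inl ⟨i, rfl, rfl⟩))))
          · exact Or.inr (Or.inr (Or.inr (Or.inr (Or.inr ⟨i, rfl, rfl⟩))))
    rw [hedge, finsum_mem_coe_finset]
    -- disjointness
    have hd12 : Disjoint F1 F2 := by
      rw [Finset.disjoint_left]
      simp only [hF1, hF2, Finset.mem_image, Finset.mem_univ, true_and]
      rintro e ⟨x, rfl⟩ ⟨y, hy⟩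
      rcases hlit_cases x with hx | hx <;> rcases hlit_cases y with hy' | hy' <;>
        rw [hx, hy'] at hy <;> simp [Sym2.eq_iff] at hy
    have hd13 : Disjoint F1 F3 := by
      rw [Finset.disjoint_left]
      simp only [hF1, hF3, Finset.mem_image, Finset.mem_univ, true_and]
      rintro e ⟨x, rfl⟩ ⟨i, hy⟩
      rcases hlit_cases x with hx | hx <;> rcases hlit_cases (xw i) with hy' | hy' <;>
        rw [hx, hy'] at hy <;> simp [Sym2.eq_iff] at hy
    have hd23 : Disjoint F2 F3 := by
      rw [Finset.disjoint_left]
      simp only [hF2, hF3, Finset.mem_image, Finset.mem_univ, true_and]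
      rintro e ⟨x, rfl⟩ ⟨i, hy⟩
      rcases hlit_cases x with hx | hx <;> rcases hlit_cases (xw i) with hy' | hy' <;>
        rw [hx, hy'] at hy <;> simp [Sym2.eq_iff] at hy
    rw [Finset.sum_union (Finset.disjoint_union_left.mpr ⟨hd13, hd23⟩),
      Finset.sum_union hd12]
    rw [hF1, Finset.sum_image (by
      intro x _ y _ h
      rcases Sym2.eq_iff.mp h with ⟨_, h2⟩ | ⟨h1, _⟩
      · exact hlit_inj _ _ h2
      · rcases hlit_cases y with hy | hy <;> rw [hy] at h1 <;> simp at h1)]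
    rw [hF2, Finset.sum_image (by
      intro x _ y _ h
      rcases Sym2.eq_iff.mp h with ⟨_, h2⟩ | ⟨h1, h2⟩
      · simpa using h2
      · rcases hlit_cases x with hx | hx <;> rw [hx] at h1 <;> simp at h1)]
    rw [hF3, Finset.sum_image (by
      intro i _ j _ h
      rcases Sym2.eq_iff.mp h with ⟨h1, _⟩ | ⟨h1, _⟩
      · simpa using h1
      · rcases hlit_cases (xw j) with hy | hy <;> rw [hy] at h1 <;> simp at h1)]
    have e1 : ∀ x : Fin k, w s(PhiVert.root, lit x) = 11 := by
      intro x
      rcases hlit_cases x with hx | hx <;> rw [hx]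
      · exact hw3 x
      · exact hw4 x
    have e2 : ∀ x : Fin k, w s(lit x, PhiVert.u x) = 1 := by
      intro x
      rcases hlit_cases x with hx | hx <;> rw [hx]
      · exact hw1 x
      · rw [Sym2.eq_swap]; exact hw2 x
    have e3 : ∀ i : Fin l, w s(PhiVert.clause i, lit (xw i)) = 11 ^ ((i : ℕ) + 2) := by
      intro i
      have hAx : A (xw i) = bw i := hAw i
      have hφx := hφw i
      cases hb : bw i <;> rw [hb] at hφx
      · have hl : lit (xw i) = .f (xw i) := by simp [hlitdef, hAx, hb]
        rw [hl]; exact hw6 i (xw i) hφx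
      · have hl : lit (xw i) = .t (xw i) := by simp [hlitdef, hAx, hb]
        rw [hl]; exact hw5 i (xw i) hφx
    rw [Finset.sum_congr rfl fun x _ => e1 x, Finset.sum_congr rfl fun x _ => e2 x,
      Finset.sum_congr rfl fun i _ => e3 i]
    simp only [Finset.sum_const, Finset.card_univ, Fintype.card_fin, nsmul_eq_mul,
      mul_one]
    ring_nf
    linarith


theorem extract {k l : ℕ} (φ : Fin l → Fin k → Option Bool)
    (G : SimpleGraph (PhiVert k l)) (w : Sym2 (PhiVert k l) → ℝ)
    (hG : ∀ a b : PhiVert k l, G.Adj a b ↔ phiAdj φ a b)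
    (hw1 : ∀ x : Fin k, w s(PhiVert.t x, PhiVert.u x) = 1)
    (hw2 : ∀ x : Fin k, w s(PhiVert.u x, PhiVert.f x) = 1)
    (hw3 : ∀ x : Fin k, w s(PhiVert.root, PhiVert.t x) = 11)
    (hw4 : ∀ x : Fin k, w s(PhiVert.root, PhiVert.f x) = 11)
    (hw5 : ∀ (i : Fin l) (x : Fin k), φ i x = some true →
      w s(PhiVert.clause i, PhiVert.t x) = 11 ^ ((i : ℕ) + 2))
    (hw6 : ∀ (i : Fin l) (x : Fin k), φ i x = some false →
      w s(PhiVert.clause i, PhiVert.f x) = 11 ^ ((i : ℕ) + 2))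
    (T : G.Subgraph) (hTc : T.Connected) (hTt : phiTerminals k l ⊆ T.verts)
    (hTcost : ∑ᶠ e ∈ T.edgeSet, w e ≤ 12 * k + ∑ i : Fin l, (11 : ℝ) ^ ((i : ℕ) + 2)) :
    ∃ A : Fin k → Bool, ∀ i : Fin l, ∃ (x : Fin k) (b : Bool),
      φ i x = some b ∧ A x = b := by
  classical
  have hroot : PhiVert.root ∈ T.verts := hTt (Or.inr (Or.inl rfl))
  have humem : ∀ x, PhiVert.u x ∈ T.verts := fun x => hTt (Or.inl ⟨x, rfl⟩)
  have hclmem : ∀ i, PhiVert.clause i ∈ T.verts := fun i => hTt (Or.inr (Or.inr ⟨i, rfl⟩))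
  have hadjP : ∀ a b, T.Adj a b → phiAdj φ a b := fun a b h => (hG a b).mp (T.adj_sub h)
  -- every non-root vertex of T has a T-neighbour
  have hnbr : ∀ v, v ∈ T.verts → v ≠ PhiVert.root → ∃ c, T.Adj v c := by
    intro v hv hne
    obtain ⟨p⟩ := hTc.coe.preconnected ⟨v, hv⟩ ⟨.root, hroot⟩
    have hnn : ¬ p.Nil :=
      SimpleGraph.Walk.not_nil_of_ne (fun h => hne (congrArg Subtype.val h))
    obtain ⟨xx, h, q, rfl⟩ := SimpleGraph.Walk.not_nil_iff.mp hnn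
    exact ⟨xx.val, h⟩
  -- classification of neighbours of u x
  have hu_nbr : ∀ x c, T.Adj (.u x) c → c = .t x ∨ c = .f x := by
    intro x c h
    rcases hadjP _ _ h with ⟨y, hy⟩ | ⟨y, hy⟩ | ⟨j, y, hf, hy⟩ | ⟨j, y, hf, hy⟩
    · rcases hy with ⟨h1, h2⟩ | ⟨h1, h2⟩ | ⟨h1, h2⟩ | ⟨h1, h2⟩ <;> simp_all
    · rcases hy with ⟨h1, h2⟩ | ⟨h1, h2⟩ | ⟨h1, h2⟩ | ⟨h1, h2⟩ <;> simp_all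
    · rcases hy with ⟨h1, h2⟩ | ⟨h1, h2⟩ <;> simp_all
    · rcases hy with ⟨h1, h2⟩ | ⟨h1, h2⟩ <;> simp_all
  -- classification of neighbours of clause i
  have hcl_nbr : ∀ i c, T.Adj (.clause i) c →
      ∃ x, (φ i x = some true ∧ c = .t x) ∨ (φ i x = some false ∧ c = .f x) := by
    intro i c h
    rcases hadjP _ _ h with ⟨y, hy⟩ | ⟨y, hy⟩ | ⟨j, y, hf, hy⟩ | ⟨j, y, hf, hy⟩
    · exfalso; rcases hy with ⟨h1, _⟩ | ⟨h1, _⟩ | ⟨h1, _⟩ | ⟨h1, _⟩ <;> simp at h1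
    · exfalso; rcases hy with ⟨h1, _⟩ | ⟨h1, _⟩ | ⟨h1, _⟩ | ⟨h1, _⟩ <;> simp at h1
    · rcases hy with ⟨h1, h2⟩ | ⟨h1, h2⟩
      · injection h1 with h1'; subst h1'; exact ⟨y, Or.inl ⟨hf, h2⟩⟩
      · exfalso; simp at h1
    · rcases hy with ⟨h1, h2⟩ | ⟨h1, h2⟩
      · injection h1 with h1'; subst h1'; exact ⟨y, Or.inr ⟨hf, h2⟩⟩
      · exfalso; simp at h1
  -- every T-edge is coded
  have hclass : ∀ a b, T.Adj a b → ∃ c : ECode k l, eEdge c = s(a, b) := by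
    intro a b h
    rcases hadjP _ _ h with ⟨y, hy⟩ | ⟨y, hy⟩ | ⟨j, y, hf, hy⟩ | ⟨j, y, hf, hy⟩
    · rcases hy with ⟨rfl, rfl⟩ | ⟨rfl, rfl⟩ | ⟨rfl, rfl⟩ | ⟨rfl, rfl⟩
      · exact ⟨.inl (.inl y), rfl⟩
      · exact ⟨.inl (.inl y), Sym2.eq_swap⟩
      · exact ⟨.inl (.inr y), rfl⟩
      · exact ⟨.inl (.inr y), Sym2.eq_swap⟩
    · rcases hy with ⟨rfl, rfl⟩ | ⟨rfl, rfl⟩ | ⟨rfl, rfl⟩ | ⟨rfl, rfl⟩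
      · exact ⟨.inr (.inl (.inl y)), rfl⟩
      · exact ⟨.inr (.inl (.inl y)), Sym2.eq_swap⟩
      · exact ⟨.inr (.inl (.inr y)), rfl⟩
      · exact ⟨.inr (.inl (.inr y)), Sym2.eq_swap⟩
    · rcases hy with ⟨rfl, rfl⟩ | ⟨rfl, rfl⟩
      · exact ⟨.inr (.inr (.inl (j, y))), rfl⟩
      · exact ⟨.inr (.inr (.inl (j, y))), Sym2.eq_swap⟩
    · rcases hy with ⟨rfl, rfl⟩ | ⟨rfl, rfl⟩
      · exact ⟨.inr (.inr (.inr (j, y))), rfl⟩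
      · exact ⟨.inr (.inr (.inr (j, y))), Sym2.eq_swap⟩
  -- weight of a coded edge present in T
  have hval : ∀ c : ECode k l, eEdge c ∈ T.edgeSet → w (eEdge c) = eVal c := by
    intro c hc
    rcases c with (x | x) | ((x | x) | (⟨i, x⟩ | ⟨i, x⟩))
    · exact hw1 x
    · exact hw2 x
    · exact hw3 x
    · exact hw4 x
    · have h := hadjP _ _ (SimpleGraph.Subgraph.mem_edgeSet.mp hc)
      have hφ : φ i x = some true := by
        rcases h with ⟨y, hy⟩ | ⟨y, hy⟩ | ⟨j, y, hf, hy⟩ | ⟨j, y, hf, hy⟩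
        · exfalso; rcases hy with ⟨h1, _⟩ | ⟨h1, _⟩ | ⟨h1, _⟩ | ⟨h1, _⟩ <;> simp at h1
        · exfalso; rcases hy with ⟨h1, _⟩ | ⟨h1, _⟩ | ⟨h1, _⟩ | ⟨h1, _⟩ <;> simp at h1
        · rcases hy with ⟨h1, h2⟩ | ⟨h1, h2⟩
          · injection h1 with h1'; injection h2 with h2'; subst h1'; subst h2'; exact hf
          · exfalso; simp at h1
        · rcases hy with ⟨h1, h2⟩ | ⟨h1, h2⟩
          · exfalso; simp at h2
          · exfalso; simp at h1
      exact hw5 i x hφ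
    · have h := hadjP _ _ (SimpleGraph.Subgraph.mem_edgeSet.mp hc)
      have hφ : φ i x = some false := by
        rcases h with ⟨y, hy⟩ | ⟨y, hy⟩ | ⟨j, y, hf, hy⟩ | ⟨j, y, hf, hy⟩
        · exfalso; rcases hy with ⟨h1, _⟩ | ⟨h1, _⟩ | ⟨h1, _⟩ | ⟨h1, _⟩ <;> simp at h1
        · exfalso; rcases hy with ⟨h1, _⟩ | ⟨h1, _⟩ | ⟨h1, _⟩ | ⟨h1, _⟩ <;> simp at h1
        · rcases hy with ⟨h1, h2⟩ | ⟨h1, h2⟩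
          · exfalso; simp at h2
          · exfalso; simp at h1
        · rcases hy with ⟨h1, h2⟩ | ⟨h1, h2⟩
          · injection h1 with h1'; injection h2 with h2'; subst h1'; subst h2'; exact hf
          · exfalso; simp at h1
      exact hw6 i x hφ
  -- edge finset and code finset
  have hfinE : T.edgeSet.Finite := Set.toFinite _
  set E : Finset (Sym2 (PhiVert k l)) := hfinE.toFinset with hEdef
  have hmemE : ∀ e, e ∈ E ↔ e ∈ T.edgeSet := fun e => Set.Finite.mem_toFinset _
  set Cs : Finset (ECode k l) := Finset.univ.filter (fun c => eEdge c ∈ T.edgeSet) with hCsdef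
  have hcod : ∀ e, e ∈ T.edgeSet → ∃ c : ECode k l, eEdge c = e := by
    intro e
    induction e using Sym2.ind with
    | _ a b => exact fun he => hclass a b (SimpleGraph.Subgraph.mem_edgeSet.mp he)
  choose cod hcodeq using hcod
  have hiCs : ∀ (c : ECode k l), c ∈ Cs → eEdge c ∈ E := by
    intro c hc
    rw [hmemE]
    exact (Finset.mem_filter.mp hc).2
  have hjE : ∀ (e : Sym2 (PhiVert k l)) (he : e ∈ E), cod e ((hmemE e).mp he) ∈ Cs := by
    intro e he
    rw [hCsdef, Finset.mem_filter]
    exact ⟨Finset.mem_univ _, by rw [hcodeq e ((hmemE e).mp he)]; exact (hmemE e).mp he⟩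
  have hleft : ∀ (c : ECode k l) (hc : c ∈ Cs),
      cod (eEdge c) ((hmemE _).mp (hiCs c hc)) = c := by
    intro c hc
    exact eEdge_injective (hcodeq _ _)
  have hright : ∀ (e : Sym2 (PhiVert k l)) (he : e ∈ E),
      eEdge (cod e ((hmemE e).mp he)) = e := fun e he => hcodeq _ _
  have hcardE : E.card = Cs.card :=
    Finset.card_bij' (fun e he => cod e ((hmemE e).mp he)) (fun c _ => eEdge c)
      hjE hiCs hright hleft
  have hcostE : ∑ e ∈ E, w e = ∑ c ∈ Cs, eVal c := by
    refine Finset.sum_bij' (fun e he => cod e ((hmemE e).mp he)) (fun c _ => eEdge c)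
      hjE hiCs hright hleft ?_
    intro e he
    have hm : eEdge (cod e ((hmemE e).mp he)) ∈ T.edgeSet := by
      rw [hcodeq e ((hmemE e).mp he)]; exact (hmemE e).mp he
    rw [← hval _ hm, hcodeq e ((hmemE e).mp he)]
  -- natural number indicator counts
  set P1 : ℕ := ∑ x : Fin k, (if PhiVert.t x ∈ T.verts then 1 else 0) with hP1def
  set P2 : ℕ := ∑ x : Fin k, (if PhiVert.f x ∈ T.verts then 1 else 0) with hP2def
  set U1 : ℕ := ∑ x : Fin k, (if s(PhiVert.t x, PhiVert.u x) ∈ T.edgeSet then 1 else 0)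
    with hU1def
  set U2 : ℕ := ∑ x : Fin k, (if s(PhiVert.u x, PhiVert.f x) ∈ T.edgeSet then 1 else 0)
    with hU2def
  set R1 : ℕ := ∑ x : Fin k, (if s(PhiVert.root, PhiVert.t x) ∈ T.edgeSet then 1 else 0)
    with hR1def
  set R2 : ℕ := ∑ x : Fin k, (if s(PhiVert.root, PhiVert.f x) ∈ T.edgeSet then 1 else 0)
    with hR2def
  set D1 : Fin l → ℕ :=
    fun i => ∑ x : Fin k, (if s(PhiVert.clause i, PhiVert.t x) ∈ T.edgeSet then 1 else 0)
    with hD1def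
  set D2 : Fin l → ℕ :=
    fun i => ∑ x : Fin k, (if s(PhiVert.clause i, PhiVert.f x) ∈ T.edgeSet then 1 else 0)
    with hD2def
  -- cardinality of the edge set in terms of the counts
  have hcard2 : E.card = U1 + U2 + (R1 + R2) + ((∑ i : Fin l, D1 i) + ∑ i : Fin l, D2 i) := by
    rw [hcardE, hCsdef, Finset.card_filter, hU1def, hU2def, hR1def, hR2def, hD1def, hD2def]
    simp only [Fintype.sum_sum_type, Fintype.sum_prod_type, eEdge]
    ring
    rfl
  -- cost in terms of the counts
  have hcost2 : ∑ e ∈ E, w e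
      = ((U1 : ℝ) + (U2 : ℝ)) + 11 * ((R1 : ℝ) + (R2 : ℝ))
        + ((∑ i : Fin l, (11 : ℝ) ^ ((i : ℕ) + 2) * (D1 i : ℝ))
          + ∑ i : Fin l, (11 : ℝ) ^ ((i : ℕ) + 2) * (D2 i : ℝ)) := by
    rw [hcostE, hCsdef, Finset.sum_filter]
    simp only [Fintype.sum_sum_type, Fintype.sum_prod_type, eEdge.eq_1, eEdge.eq_2, eEdge.eq_3, eEdge.eq_4, eEdge.eq_5, eEdge.eq_6, eVal]
    rw [sum_ite_const, sum_ite_const, sum_ite_const, sum_ite_const]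
    simp only [sum_ite_const]
    rw [hU1def, hU2def, hR1def, hR2def, hD1def, hD2def]
    push_cast
    ring
  -- per-variable: u x has an incident unit edge, and endpoints are in T
  have hUx : ∀ x : Fin k,
      1 ≤ (if s(PhiVert.t x, PhiVert.u x) ∈ T.edgeSet then 1 else 0)
        + (if s(PhiVert.u x, PhiVert.f x) ∈ T.edgeSet then (1:ℕ) else 0) := by
    intro x
    obtain ⟨c, hc⟩ := hnbr (PhiVert.u x) (humem x) (by simp)
    rcases hu_nbr x c hc with rfl | rfl
    · have : s(PhiVert.t x, PhiVert.u x) ∈ T.edgeSet := by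
        rw [Sym2.eq_swap]
        exact SimpleGraph.Subgraph.mem_edgeSet.mpr hc
      rw [if_pos this]; omega
    · have : s(PhiVert.u x, PhiVert.f x) ∈ T.edgeSet :=
        SimpleGraph.Subgraph.mem_edgeSet.mpr hc
      rw [if_pos this]; omega
  have hU1P : U1 ≤ P1 := by
    rw [hU1def, hP1def]
    refine Finset.sum_le_sum fun x _ => ?_
    by_cases h : s(PhiVert.t x, PhiVert.u x) ∈ T.edgeSet
    · rw [if_pos h, if_pos (T.edge_vert (SimpleGraph.Subgraph.mem_edgeSet.mp h))]
    · simp [h]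
  have hU2P : U2 ≤ P2 := by
    rw [hU2def, hP2def]
    refine Finset.sum_le_sum fun x _ => ?_
    by_cases h : s(PhiVert.u x, PhiVert.f x) ∈ T.edgeSet
    · rw [if_pos h, if_pos (T.edge_vert (T.adj_symm (SimpleGraph.Subgraph.mem_edgeSet.mp h)))]
    · simp [h]
  have hR1P : R1 ≤ P1 := by
    rw [hR1def, hP1def]
    refine Finset.sum_le_sum fun x _ => ?_
    by_cases h : s(PhiVert.root, PhiVert.t x) ∈ T.edgeSet
    · rw [if_pos h, if_pos (T.edge_vert (T.adj_symm (SimpleGraph.Subgraph.mem_edgeSet.mp h)))]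
    · simp [h]
  have hR2P : R2 ≤ P2 := by
    rw [hR2def, hP2def]
    refine Finset.sum_le_sum fun x _ => ?_
    by_cases h : s(PhiVert.root, PhiVert.f x) ∈ T.edgeSet
    · rw [if_pos h, if_pos (T.edge_vert (T.adj_symm (SimpleGraph.Subgraph.mem_edgeSet.mp h)))]
    · simp [h]
  have hUP : U1 + U2 ≤ P1 + P2 := Nat.add_le_add hU1P hU2P
  have hRP : R1 + R2 ≤ P1 + P2 := Nat.add_le_add hR1P hR2P
  -- clause witnesses
  have hwitE : ∀ i : Fin l, ∃ x,
      (φ i x = some true ∧ s(PhiVert.clause i, PhiVert.t x) ∈ T.edgeSet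
        ∧ PhiVert.t x ∈ T.verts)
      ∨ (φ i x = some false ∧ s(PhiVert.clause i, PhiVert.f x) ∈ T.edgeSet
        ∧ PhiVert.f x ∈ T.verts) := by
    intro i
    obtain ⟨c, hc⟩ := hnbr (PhiVert.clause i) (hclmem i) (by simp)
    obtain ⟨x, hx⟩ := hcl_nbr i c hc
    rcases hx with ⟨hφ, rfl⟩ | ⟨hφ, rfl⟩
    · exact ⟨x, Or.inl ⟨hφ, SimpleGraph.Subgraph.mem_edgeSet.mpr hc,
        T.edge_vert (T.adj_symm hc)⟩⟩
    · exact ⟨x, Or.inr ⟨hφ, SimpleGraph.Subgraph.mem_edgeSet.mpr hc,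
        T.edge_vert (T.adj_symm hc)⟩⟩
  have hd1 : ∀ i : Fin l, 1 ≤ D1 i + D2 i := by
    intro i
    obtain ⟨x, hx⟩ := hwitE i
    rcases hx with ⟨_, hmem, _⟩ | ⟨_, hmem, _⟩
    · have h1 : 1 ≤ D1 i := by
        rw [hD1def]
        calc 1 = (if s(PhiVert.clause i, PhiVert.t x) ∈ T.edgeSet then 1 else 0) := by
              rw [if_pos hmem]
        _ ≤ _ := Finset.single_le_sum (f := fun y =>
              (if s(PhiVert.clause i, PhiVert.t y) ∈ T.edgeSet then 1 else 0))
              (fun _ _ => Nat.zero_le _) (Finset.mem_univ x)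
      omega
    · have h1 : 1 ≤ D2 i := by
        rw [hD2def]
        calc 1 = (if s(PhiVert.clause i, PhiVert.f x) ∈ T.edgeSet then 1 else 0) := by
              rw [if_pos hmem]
        _ ≤ _ := Finset.single_le_sum (f := fun y =>
              (if s(PhiVert.clause i, PhiVert.f y) ∈ T.edgeSet then 1 else 0))
              (fun _ _ => Nat.zero_le _) (Finset.mem_univ x)
      omega
  -- vertex count
  have h_u : (∑ x : Fin k, if PhiVert.u x ∈ T.verts then (1:ℕ) else 0) = k := by
    rw [Finset.sum_congr rfl fun x _ => if_pos (humem x)]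
    simp
  have h_cl : (∑ i : Fin l, if PhiVert.clause i ∈ T.verts then (1:ℕ) else 0) = l := by
    rw [Finset.sum_congr rfl fun i _ => if_pos (hclmem i)]
    simp
  have hvc : Fintype.card ↥T.verts = P1 + (k + (P2 + (1 + l))) := by
    rw [Fintype.card_subtype, Finset.card_filter, sum_phiVert
      (fun v => if v ∈ T.verts then (1:ℕ) else 0)]
    rw [h_u, h_cl, if_pos hroot, hP1def, hP2def]
  -- connectivity: number of vertices at most number of edges + 1
  have hcc : Fintype.card ↥T.verts ≤ (T.coe.edgeSet.toFinite.toFinset).card + 1 :=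
    conn_card_aux T.coe hTc.coe
  have hcoeE : (T.coe.edgeSet.toFinite.toFinset).card ≤ E.card := by
    refine Finset.card_le_card_of_injOn (Sym2.map Subtype.val) ?_ ?_
    · intro e he
      rw [Finset.mem_coe, Set.Finite.mem_toFinset] at he
      revert he
      refine Sym2.ind (fun a b => ?_) e
      intro he
      rw [Sym2.map_pair_eq, Finset.mem_coe, hmemE]
      exact SimpleGraph.Subgraph.mem_edgeSet.mpr ((SimpleGraph.mem_edgeSet T.coe).mp he)
    · exact (Sym2.map.injective Subtype.val_injective).injOn
  have hcards : P1 + (k + (P2 + (1 + l)))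
      ≤ U1 + U2 + (R1 + R2) + ((∑ i : Fin l, D1 i) + ∑ i : Fin l, D2 i) + 1 := by
    rw [← hvc, ← hcard2]
    exact le_trans hcc (by omega)
  have hlD : l ≤ (∑ i : Fin l, D1 i) + ∑ i : Fin l, D2 i := by
    rw [← Finset.sum_add_distrib]
    calc l = ∑ _i : Fin l, 1 := by simp
    _ ≤ _ := Finset.sum_le_sum fun i _ => hd1 i
  -- budget inequality
  have hbudget : ∑ e ∈ E, w e ≤ 12 * k + ∑ i : Fin l, (11 : ℝ) ^ ((i : ℕ) + 2) := by
    rw [hEdef, ← finsum_mem_coe_finset]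
    rw [Set.Finite.coe_toFinset]
    exact hTcost
  -- the geometric lower bound on the clause part of the cost
  have hpt : ∀ i ∈ (Finset.univ : Finset (Fin l)),
      (11:ℝ) ^ ((i:ℕ)+2) + 121 * ((D1 i : ℝ) + (D2 i : ℝ)) - 121
      ≤ (11 : ℝ) ^ ((i : ℕ) + 2) * (D1 i : ℝ) + (11 : ℝ) ^ ((i : ℕ) + 2) * (D2 i : ℝ) := by
    intro i _
    have h1 : (1:ℝ) ≤ (D1 i : ℝ) + (D2 i : ℝ) := by exact_mod_cast hd1 i
    have h2 : (121:ℝ) ≤ 11 ^ ((i:ℕ)+2) := by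
      calc (121:ℝ) = 11 ^ 2 := by norm_num
      _ ≤ 11 ^ ((i:ℕ)+2) := by
          apply pow_le_pow_right₀ (by norm_num)
          omega
    nlinarith [mul_nonneg (sub_nonneg.mpr h2) (sub_nonneg.mpr h1)]
  have hsum := Finset.sum_le_sum hpt
  have hLeq : ∑ i : Fin l, ((11:ℝ) ^ ((i:ℕ)+2) + 121 * ((D1 i : ℝ) + (D2 i : ℝ)) - 121)
      = (∑ i : Fin l, (11:ℝ) ^ ((i:ℕ)+2))
        + 121 * ((((∑ i : Fin l, D1 i) + ∑ i : Fin l, D2 i : ℕ)) : ℝ) - 121 * l := by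
    rw [Finset.sum_sub_distrib, Finset.sum_add_distrib, ← Finset.mul_sum]
    push_cast
    rw [Finset.sum_add_distrib]
    simp [Finset.sum_const, Finset.card_univ]
    ring
  have hReq : ∑ i : Fin l, ((11 : ℝ) ^ ((i : ℕ) + 2) * (D1 i : ℝ)
        + (11 : ℝ) ^ ((i : ℕ) + 2) * (D2 i : ℝ))
      = (∑ i : Fin l, (11 : ℝ) ^ ((i : ℕ) + 2) * (D1 i : ℝ))
        + ∑ i : Fin l, (11 : ℝ) ^ ((i : ℕ) + 2) * (D2 i : ℝ) :=
    Finset.sum_add_distrib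
  -- conclude P1 + P2 ≤ k
  have hP_le : P1 + P2 ≤ k := by
    rw [hcost2] at hbudget
    rw [hLeq, hReq] at hsum
    have hc1 : ((U1:ℝ) + U2) ≤ ((P1:ℝ) + P2) := by exact_mod_cast hUP
    have hc2 : ((P1:ℝ) + (k + (P2 + (1 + l))))
        ≤ ((U1:ℝ) + U2) + ((R1:ℝ) + R2)
          + ((((∑ i : Fin l, D1 i) + ∑ i : Fin l, D2 i : ℕ) : ℝ)) + 1 := by
      exact_mod_cast hcards
    have hc3 : (l:ℝ) ≤ (((∑ i : Fin l, D1 i) + ∑ i : Fin l, D2 i : ℕ) : ℝ) := by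
      exact_mod_cast hlD
    have : (P1:ℝ) + P2 ≤ k := by linarith
    exact_mod_cast this
  -- each variable has at most one literal vertex in T
  have hone : ∀ x : Fin k, ¬(PhiVert.t x ∈ T.verts ∧ PhiVert.f x ∈ T.verts) := by
    intro x ⟨h1, h2⟩
    have hge : ∀ y ∈ (Finset.univ : Finset (Fin k)),
        1 ≤ (if PhiVert.t y ∈ T.verts then (1:ℕ) else 0)
          + (if PhiVert.f y ∈ T.verts then 1 else 0) := by
      intro y _
      have h3 := hUx y
      have h4 : (if s(PhiVert.t y, PhiVert.u y) ∈ T.edgeSet then (1:ℕ) else 0)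
          ≤ (if PhiVert.t y ∈ T.verts then 1 else 0) := by
        by_cases h : s(PhiVert.t y, PhiVert.u y) ∈ T.edgeSet
        · rw [if_pos h, if_pos (T.edge_vert (SimpleGraph.Subgraph.mem_edgeSet.mp h))]
        · simp [h]
      have h5 : (if s(PhiVert.u y, PhiVert.f y) ∈ T.edgeSet then (1:ℕ) else 0)
          ≤ (if PhiVert.f y ∈ T.verts then 1 else 0) := by
        by_cases h : s(PhiVert.u y, PhiVert.f y) ∈ T.edgeSet
        · rw [if_pos h, if_pos (T.edge_vert (T.adj_symm (SimpleGraph.Subgraph.mem_edgeSet.mp h)))]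
        · simp [h]
      omega
    have hlt := Finset.sum_lt_sum hge ⟨x, Finset.mem_univ x, by
      rw [if_pos h1, if_pos h2]; omega⟩
    rw [Finset.sum_add_distrib] at hlt
    rw [← hP1def, ← hP2def] at hlt
    simp only [Finset.sum_const, Finset.card_univ, Fintype.card_fin, smul_eq_mul,
      mul_one] at hlt
    omega
  -- the assignment
  refine ⟨fun x => if PhiVert.t x ∈ T.verts then true else false, ?_⟩
  intro i
  obtain ⟨x, hx⟩ := hwitE i
  rcases hx with ⟨hφ, _, hv⟩ | ⟨hφ, _, hv⟩
  · exact ⟨x, true, hφ, if_pos hv⟩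
  · refine ⟨x, false, hφ, if_neg ?_⟩
    intro hcon
    exact hone x ⟨hcon, hv⟩


end Stmt9Aux

/-- In `G_φ` there is a Steiner tree (a connected subgraph containing all
terminals) of cost at most `12k + Σ_{i=1}^{ℓ} 11^{i+1}` iff `φ` is satisfiable. -/
theorem stmt9 {k l : ℕ} (φ : Fin l → Fin k → Option Bool)
    (G : SimpleGraph (PhiVert k l)) (w : Sym2 (PhiVert k l) → ℝ)
    (hG : ∀ a b : PhiVert k l, G.Adj a b ↔ phiAdj φ a b)
    (hw1 : ∀ x : Fin k, w s(PhiVert.t x, PhiVert.u x) = 1)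
    (hw2 : ∀ x : Fin k, w s(PhiVert.u x, PhiVert.f x) = 1)
    (hw3 : ∀ x : Fin k, w s(PhiVert.root, PhiVert.t x) = 11)
    (hw4 : ∀ x : Fin k, w s(PhiVert.root, PhiVert.f x) = 11)
    (hw5 : ∀ (i : Fin l) (x : Fin k), φ i x = some true →
      w s(PhiVert.clause i, PhiVert.t x) = 11 ^ ((i : ℕ) + 2))
    (hw6 : ∀ (i : Fin l) (x : Fin k), φ i x = some false →
      w s(PhiVert.clause i, PhiVert.f x) = 11 ^ ((i : ℕ) + 2))
 :
    (∃ T : G.Subgraph, T.Connected ∧ phiTerminals k l ⊆ T.verts ∧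
        ∑ᶠ e ∈ T.edgeSet, w e ≤ 12 * k + ∑ i : Fin l, (11 : ℝ) ^ ((i : ℕ) + 2)) ↔
      ∃ A : Fin k → Bool, ∀ i : Fin l, ∃ (x : Fin k) (b : Bool),
        φ i x = some b ∧ A x = b := by
  constructor
  · rintro ⟨T, hTc, hTt, hTcost⟩
    exact Stmt9Aux.extract φ G w hG hw1 hw2 hw3 hw4 hw5 hw6 T hTc hTt hTcost
  · rintro ⟨A, hA⟩
    exact Stmt9Aux.construct φ G w hG hw1 hw2 hw3 hw4 hw5 hw6 A hA
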